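/- Let f : ℝⁿ → ℝ and c : ℝⁿ → ℝᵐ be twice continuously differentiable, write g(x) = ∇f(x) and A(x) = ∇c(x) (the n×m matrix with columns ∇c_i(x)), and suppose A(x) has full column rank m for every x ∈ ℝⁿ. Fix σ ∈ ℝ and define y_σ(x) = (A(x)ᵀA(x))⁻¹(A(x)ᵀg(x) − σc(x)). Then y_σ is differentiable, and for every x ∈ ℝⁿ and every direction v ∈ ℝⁿ, the directional derivative satisfies A(x)ᵀA(x) · D y_σ(x)[v] = A(x)ᵀ (H_σ(x) − σI) v + S(x, g_σ(x)) v, where g_σ(x) = g(x) − A(x) y_σ(x), H_σ(x) = ∇²f(x) − Σ_{i=1}^{m} (y_σ(x))_i ∇²c_i(x), and S(x, w) is the m×n matrix whose i-th row is wᵀ∇²c_i(x). -/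

import Mathlib

open Matrix

noncomputable section

lemma aux_isUnit_of_rank {p : ℕ} (B : Matrix (Fin p) (Fin p) ℝ) (h : B.rank = p) : IsUnit B := by
  rw [← Matrix.mulVec_injective_iff_isUnit]
  have h2 := LinearMap.finrank_range_add_finrank_ker B.mulVecLin
  rw [Matrix.rank] at h
  rw [h, Module.finrank_fintype_fun_eq_card, Fintype.card_fin] at h2
  have hker : Module.finrank ℝ (LinearMap.ker B.mulVecLin) = 0 := by omega
  have : LinearMap.ker B.mulVecLin = ⊥ := Submodule.finrank_eq_zero.mp hker
  exact LinearMap.ker_eq_bot.mp this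

lemma aux_sum_single {p : ℕ} (v : EuclideanSpace ℝ (Fin p)) :
    ∑ j, v j • EuclideanSpace.single j (1:ℝ) = v := by
  have := (EuclideanSpace.basisFun (Fin p) ℝ).toBasis.sum_repr v
  simpa [EuclideanSpace.basisFun_apply] using this

lemma aux_apply_sum {p : ℕ} {ι : Type*} (s : Finset ι) (w : ι → EuclideanSpace ℝ (Fin p)) (i : Fin p) :
    (∑ j ∈ s, w j) i = ∑ j ∈ s, w j i :=
  map_sum (EuclideanSpace.proj (𝕜 := ℝ) i) w s

lemma aux_clm_coord {p q : ℕ} (L : EuclideanSpace ℝ (Fin p) →L[ℝ] EuclideanSpace ℝ (Fin q))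
    (v : EuclideanSpace ℝ (Fin p)) (i : Fin q) :
    L v i = ∑ j, L (EuclideanSpace.single j 1) i * v j := by
  have h1 : L v = ∑ j, v j • L (EuclideanSpace.single j 1) := by
    conv_lhs => rw [← aux_sum_single v]
    simp
  rw [h1, aux_apply_sum]
  exact Finset.sum_congr rfl fun j _ => by simp [mul_comm]

lemma aux_grad_contdiff {p : ℕ} {h : EuclideanSpace ℝ (Fin p) → ℝ} (hh : ContDiff ℝ 2 h) :
    ContDiff ℝ 1 (gradient h) := by
  have h1 : ContDiff ℝ 1 (fderiv ℝ h) := hh.fderiv_right (by norm_num)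
  have : gradient h = fun x => (InnerProductSpace.toDual ℝ _).symm (fderiv ℝ h x) := rfl
  rw [this]
  exact ((InnerProductSpace.toDual ℝ _).symm.toContinuousLinearEquiv.contDiff).comp h1

lemma aux_inner_grad {p : ℕ} {h : EuclideanSpace ℝ (Fin p) → ℝ} (x v : EuclideanSpace ℝ (Fin p)) :
    fderiv ℝ h x v = ∑ i, gradient h x i * v i := by
  have h1 : @inner ℝ _ _ (gradient h x) v = fderiv ℝ h x v :=
    InnerProductSpace.toDual_symm_apply
  rw [← h1]
  rw [PiLp.inner_apply]
  exact Finset.sum_congr rfl fun i _ => by simp [mul_comm]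

lemma aux_prod_diff {E : Type*} [NormedAddCommGroup E] [NormedSpace ℝ E] {ι : Type*}
    (s : Finset ι) (F : ι → E → ℝ) (h : ∀ i, Differentiable ℝ (F i)) :
    Differentiable ℝ (fun z => ∏ i ∈ s, F i z) := by
  classical
  induction s using Finset.induction with
  | empty => simpa using differentiable_const (1:ℝ)
  | insert a s hx ih =>
      simp only [Finset.prod_insert hx]
      exact (h _).mul ih

lemma aux_det_diff {E : Type*} [NormedAddCommGroup E] [NormedSpace ℝ E] {p : ℕ}
    {N : E → Matrix (Fin p) (Fin p) ℝ} (h : ∀ i j, Differentiable ℝ fun z => N z i j) :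
    Differentiable ℝ fun z => (N z).det := by
  simp only [Matrix.det_apply']
  exact Differentiable.fun_sum fun s _ =>
    ((aux_prod_diff Finset.univ (fun i z => N z (s i) i) (fun i => h (s i) i)).const_mul _)

lemma aux_final {n m : ℕ} (a : Fin n → Fin m → ℝ) (g F vv : Fin n → ℝ)
    (y : Fin m → ℝ) (K : Fin m → Fin n → ℝ) (D : Fin m → ℝ) (σ : ℝ) (j : Fin m)
    (key : ∑ k, ((∑ i, a i j * a i k) * D k + y k * (∑ i, (a i j * K k i + a i k * K j i)))
      = ∑ i, (a i j * F i + g i * K j i) - σ * ∑ i, a i j * vv i) :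
    ∑ k, (∑ i, a i j * a i k) * D k
      = ∑ i, a i j * ((F i - ∑ k, y k * K k i) - σ * vv i)
        + ∑ i, (g i - ∑ k, a i k * y k) * K j i := by
  rw [Finset.sum_add_distrib] at key
  have key2 : ∑ k, (∑ i, a i j * a i k) * D k
      = (∑ i, (a i j * F i + g i * K j i) - σ * ∑ i, a i j * vv i)
        - ∑ k, y k * (∑ i, (a i j * K k i + a i k * K j i)) := by linarith
  rw [key2]
  have hswap : ∑ k, y k * (∑ i, (a i j * K k i + a i k * K j i))
      = ∑ i, ∑ k, y k * (a i j * K k i + a i k * K j i) := by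
    rw [Finset.sum_comm]
    exact Finset.sum_congr rfl fun k _ => Finset.mul_sum _ _ _
  rw [hswap, Finset.mul_sum, ← Finset.sum_sub_distrib, ← Finset.sum_sub_distrib,
    ← Finset.sum_add_distrib]
  refine Finset.sum_congr rfl fun i _ => ?_
  have h1 : ∑ k, y k * (a i j * K k i + a i k * K j i)
      = a i j * ∑ k, y k * K k i + (∑ k, a i k * y k) * K j i := by
    rw [Finset.mul_sum, Finset.sum_mul, ← Finset.sum_add_distrib]
    exact Finset.sum_congr rfl fun k _ => by ring
  rw [h1]
  ring

/-- equation (3.4b). Differentiating the normal equations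
`A(x)ᵀA(x) y_σ(x) = A(x)ᵀg(x) − σc(x)` for Fletcher's multiplier estimate gives, for
every `x` and direction `v`,
`A(x)ᵀA(x) · D y_σ(x)[v] = A(x)ᵀ(H_σ(x) − σI)v + S(x, g_σ(x))v`, where
`g_σ = g − A y_σ`, `H_σ = ∇²f − Σᵢ (y_σ)ᵢ ∇²cᵢ`, and `S(x, w)` has rows `wᵀ∇²cᵢ(x)`. -/
theorem multiplier_estimate_jacobian_identity
    {n m : ℕ}
    (f : EuclideanSpace ℝ (Fin n) → ℝ) (hf : ContDiff ℝ 2 f)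
    (c : EuclideanSpace ℝ (Fin n) → EuclideanSpace ℝ (Fin m)) (hc : ContDiff ℝ 2 c)
    (A : EuclideanSpace ℝ (Fin n) → Matrix (Fin n) (Fin m) ℝ)
    (hA : ∀ x, ∀ i : Fin n, ∀ j : Fin m, A x i j = gradient (fun z => c z j) x i)
    (hrank : ∀ x, (A x).rank = m)
    (σ : ℝ)
    (yσ : EuclideanSpace ℝ (Fin n) → Fin m → ℝ)
    (hyσ : ∀ x, yσ x =
      ((A x)ᵀ * A x)⁻¹.mulVec
        ((A x)ᵀ.mulVec (fun i => gradient f x i) - σ • fun j => c x j))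
    (Hf : EuclideanSpace ℝ (Fin n) → Matrix (Fin n) (Fin n) ℝ)
    (hHf : ∀ x i j, Hf x i j = fderiv ℝ (gradient f) x (EuclideanSpace.single j 1) i)
    (Hc : Fin m → EuclideanSpace ℝ (Fin n) → Matrix (Fin n) (Fin n) ℝ)
    (hHc : ∀ k x i j, Hc k x i j =
      fderiv ℝ (gradient fun z => c z k) x (EuclideanSpace.single j 1) i)
    (gσ : EuclideanSpace ℝ (Fin n) → Fin n → ℝ)
    (hgσ : ∀ x, gσ x = (fun i => gradient f x i) - (A x).mulVec (yσ x))
    (Hσ : EuclideanSpace ℝ (Fin n) → Matrix (Fin n) (Fin n) ℝ)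
    (hHσ : ∀ x, Hσ x = Hf x - ∑ k : Fin m, yσ x k • Hc k x)
    (Smat : EuclideanSpace ℝ (Fin n) → (Fin n → ℝ) → Matrix (Fin m) (Fin n) ℝ)
    (hSmat : ∀ x w k j, Smat x w k j = Matrix.vecMul w (Hc k x) j) :
    Differentiable ℝ yσ ∧
    ∀ (x : EuclideanSpace ℝ (Fin n)) (v : EuclideanSpace ℝ (Fin n)),
      ((A x)ᵀ * A x).mulVec (fderiv ℝ yσ x v) =
        (A x)ᵀ.mulVec ((Hσ x - σ • 1).mulVec v) + (Smat x (gσ x)).mulVec v := by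
  classical
  -- coordinate functions of c are C²
  have hcj : ∀ j : Fin m, ContDiff ℝ 2 (fun z => c z j) := fun j =>
    (EuclideanSpace.proj (𝕜 := ℝ) j).contDiff.comp hc
  have hgradc : ∀ j, Differentiable ℝ (gradient (fun z => c z j)) := fun j =>
    (aux_grad_contdiff (hcj j)).differentiable one_ne_zero
  have hgradf : Differentiable ℝ (gradient f) :=
    (aux_grad_contdiff hf).differentiable one_ne_zero
  have hAfun : ∀ i j, (fun z => A z i j)
      = fun z => (EuclideanSpace.proj (𝕜 := ℝ) i) (gradient (fun w => c w j) z) := by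
    intro i j; funext z; rw [hA]; rfl
  have hAdiff : ∀ i j, Differentiable ℝ (fun z => A z i j) := by
    intro i j
    rw [hAfun i j]
    exact (EuclideanSpace.proj (𝕜 := ℝ) i).differentiable.comp (hgradc j)
  have hgdiff : ∀ i, Differentiable ℝ (fun z => gradient f z i) := fun i =>
    (EuclideanSpace.proj (𝕜 := ℝ) i).differentiable.comp hgradf
  have hcdiff : ∀ j, Differentiable ℝ (fun z => c z j) := fun j =>
    (hcj j).differentiable two_ne_zero
  -- invertibility of AᵀA
  have hMunit : ∀ x, IsUnit ((A x)ᵀ * A x) := fun x =>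
    aux_isUnit_of_rank _ (by rw [Matrix.rank_transpose_mul_self, hrank])
  have hdet : ∀ x, IsUnit ((A x)ᵀ * A x).det := fun x =>
    (Matrix.isUnit_iff_isUnit_det _).mp (hMunit x)
  have hdetne : ∀ x, ((A x)ᵀ * A x).det ≠ 0 := fun x => (hdet x).ne_zero
  -- entries of AᵀA and of the right-hand side are differentiable
  have hMeq : ∀ j k, (fun z => ((A z)ᵀ * A z) j k) = fun z => ∑ i, A z i j * A z i k := by
    intro j k; funext z
    simp [Matrix.mul_apply, Matrix.transpose_apply]
  have hMdiff : ∀ j k, Differentiable ℝ (fun z => ((A z)ᵀ * A z) j k) := by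
    intro j k
    rw [hMeq]
    exact Differentiable.fun_sum fun i _ => (hAdiff i j).mul (hAdiff i k)
  have hbdiff : ∀ j : Fin m,
      Differentiable ℝ (fun z => ∑ i, A z i j * gradient f z i - σ * c z j) :=
    fun j => (Differentiable.fun_sum fun i _ => (hAdiff i j).mul (hgdiff i)).sub
      ((hcdiff j).const_mul σ)
  have hdetdiff : Differentiable ℝ (fun z => ((A z)ᵀ * A z).det) := aux_det_diff hMdiff
  have hadjdiff : ∀ j k, Differentiable ℝ (fun z => ((A z)ᵀ * A z).adjugate j k) := by
    intro j k
    have he : (fun z => ((A z)ᵀ * A z).adjugate j k)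
        = fun z => (((A z)ᵀ * A z).updateRow k (Pi.single j 1)).det := by
      funext z; rw [Matrix.adjugate_apply]
    rw [he]
    apply aux_det_diff
    intro a b
    rcases eq_or_ne a k with rfl | hak
    · simp only [Matrix.updateRow_apply, if_pos rfl]
      exact differentiable_const _
    · simp only [Matrix.updateRow_apply, if_neg hak]
      exact hMdiff a b
  -- the components of yσ are differentiable
  have hyrepr : ∀ (k : Fin m), (fun z => yσ z k)
      = fun z => (((A z)ᵀ * A z).det)⁻¹ *
          ∑ j, ((A z)ᵀ * A z).adjugate k j * (∑ i, A z i j * gradient f z i - σ * c z j) := by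
    intro k
    funext z
    rw [hyσ z, Matrix.inv_def]
    simp only [Matrix.smul_mulVec, Pi.smul_apply, smul_eq_mul, Ring.inverse_eq_inv',
      Matrix.mulVec, dotProduct, Matrix.transpose_apply, Pi.sub_apply]
    rw [Finset.mul_sum]
    exact Finset.sum_congr rfl fun t _ => by rw [Matrix.smul_apply, smul_eq_mul, mul_assoc]
  have hyk : ∀ k, Differentiable ℝ (fun z => yσ z k) := by
    intro k
    rw [hyrepr k]
    intro x
    exact ((hdetdiff x).inv (hdetne x)).mul
      (DifferentiableAt.fun_sum fun j _ => ((hadjdiff k j x).mul (hbdiff j x)))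
  have hydiff : Differentiable ℝ yσ := fun x =>
    differentiableAt_pi.mpr fun k => hyk k x
  refine ⟨hydiff, ?_⟩
  intro x v
  -- derivative CLMs
  set La : Fin n → Fin m → (EuclideanSpace ℝ (Fin n) →L[ℝ] ℝ) := fun i j =>
    (EuclideanSpace.proj (𝕜 := ℝ) i).comp (fderiv ℝ (gradient fun z => c z j) x) with hLa
  set Lg : Fin n → (EuclideanSpace ℝ (Fin n) →L[ℝ] ℝ) := fun i =>
    (EuclideanSpace.proj (𝕜 := ℝ) i).comp (fderiv ℝ (gradient f) x) with hLg
  set Lc : Fin m → (EuclideanSpace ℝ (Fin n) →L[ℝ] ℝ) := fun j =>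
    fderiv ℝ (fun z => c z j) x with hLc
  set Ly : Fin m → (EuclideanSpace ℝ (Fin n) →L[ℝ] ℝ) := fun k =>
    fderiv ℝ (fun z => yσ z k) x with hLy
  have da : ∀ i j, HasFDerivAt (fun z => A z i j) (La i j) x := by
    intro i j
    rw [hAfun i j]
    exact (EuclideanSpace.proj (𝕜 := ℝ) i).hasFDerivAt.comp x (hgradc j x).hasFDerivAt
  have dg : ∀ i, HasFDerivAt (fun z => gradient f z i) (Lg i) x :=
    fun i => (EuclideanSpace.proj (𝕜 := ℝ) i).hasFDerivAt.comp x (hgradf x).hasFDerivAt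
  have dc : ∀ j, HasFDerivAt (fun z => c z j) (Lc j) x := fun j => (hcdiff j x).hasFDerivAt
  have dyk : ∀ k, HasFDerivAt (fun z => yσ z k) (Ly k) x := fun k => (hyk k x).hasFDerivAt
  -- values of the derivatives in direction v
  have hLaval : ∀ i j, La i j v = (Hc j x).mulVec v i := by
    intro i j
    have : La i j v = fderiv ℝ (gradient fun z => c z j) x v i := rfl
    rw [this, aux_clm_coord]
    simp only [Matrix.mulVec, dotProduct]
    exact Finset.sum_congr rfl fun t _ => by rw [hHc]
  have hLgval : ∀ i, Lg i v = (Hf x).mulVec v i := by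
    intro i
    have : Lg i v = fderiv ℝ (gradient f) x v i := rfl
    rw [this, aux_clm_coord]
    simp only [Matrix.mulVec, dotProduct]
    exact Finset.sum_congr rfl fun t _ => by rw [hHf]
  have hLcval : ∀ j, Lc j v = ∑ i, A x i j * v i := by
    intro j
    rw [hLc]
    rw [aux_inner_grad]
    exact Finset.sum_congr rfl fun i _ => by rw [hA]
  have hDy : ∀ k, fderiv ℝ yσ x v k = Ly k v := by
    intro k
    have hp : HasFDerivAt yσ (ContinuousLinearMap.pi Ly) x := hasFDerivAt_pi.mpr dyk
    rw [hp.fderiv]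
    rfl
  -- componentwise identity
  funext j
  -- the normal equations, componentwise
  have hPhiPsi : (fun z => ∑ k, (∑ i, A z i j * A z i k) * yσ z k)
      = fun z => ∑ i, A z i j * gradient f z i - σ * c z j := by
    funext z
    have h1 : ((A z)ᵀ * A z).mulVec (yσ z)
        = (A z)ᵀ.mulVec (fun i => gradient f z i) - σ • fun j => c z j := by
      rw [hyσ z, Matrix.mulVec_mulVec, Matrix.mul_nonsing_inv _ (hdet z), Matrix.one_mulVec]
    have h2 := congrFun h1 j
    simpa [Matrix.mulVec, dotProduct, Matrix.mul_apply, Matrix.transpose_apply] using h2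
  -- derivative of the left side of the normal equations
  have dM : ∀ k, HasFDerivAt (fun z => ∑ i, A z i j * A z i k)
      (∑ i, (A x i j • La i k + A x i k • La i j)) x :=
    fun k => HasFDerivAt.fun_sum fun i _ => (da i j).fun_mul (da i k)
  have dPhi : HasFDerivAt (fun z => ∑ k, (∑ i, A z i j * A z i k) * yσ z k)
      (∑ k, ((∑ i, A x i j * A x i k) • Ly k
        + yσ x k • ∑ i, (A x i j • La i k + A x i k • La i j))) x :=
    HasFDerivAt.fun_sum fun k _ => (dM k).fun_mul (dyk k)
  have dPsi : HasFDerivAt (fun z => ∑ i, A z i j * gradient f z i - σ * c z j)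
      ((∑ i, (A x i j • Lg i + gradient f x i • La i j)) - σ • Lc j) x :=
    (HasFDerivAt.fun_sum fun i _ => (da i j).fun_mul (dg i)).fun_sub ((dc j).const_mul σ)
  have hDeq : (∑ k, ((∑ i, A x i j * A x i k) • Ly k
        + yσ x k • ∑ i, (A x i j • La i k + A x i k • La i j)))
      = (∑ i, (A x i j • Lg i + gradient f x i • La i j)) - σ • Lc j :=
    (hPhiPsi ▸ dPhi).unique dPsi
  have key := congrArg (fun (L : EuclideanSpace ℝ (Fin n) →L[ℝ] ℝ) => L v) hDeq
  simp only [ContinuousLinearMap.coe_sum', Finset.sum_apply, ContinuousLinearMap.add_apply,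
    ContinuousLinearMap.sub_apply, ContinuousLinearMap.coe_smul', Pi.smul_apply,
    smul_eq_mul, hLaval, hLgval, hLcval, hDy] at key
  -- now pure finite-sum algebra
  have hgoalL : ((A x)ᵀ * A x).mulVec (fderiv ℝ yσ x v) j
      = ∑ k, (∑ i, A x i j * A x i k) * Ly k v := by
    simp only [Matrix.mulVec, dotProduct, Matrix.mul_apply, Matrix.transpose_apply, hDy]
  have hgoalR1 : (A x)ᵀ.mulVec ((Hσ x - σ • 1).mulVec v) j
      = ∑ i, A x i j * (((Hf x).mulVec v i - ∑ k, yσ x k * (Hc k x).mulVec v i) - σ * v i) := by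
    have hmv : (Hσ x - σ • (1 : Matrix (Fin n) (Fin n) ℝ)).mulVec v
        = fun i => ((Hf x).mulVec v i - ∑ k, yσ x k * (Hc k x).mulVec v i) - σ * v i := by
      funext i
      rw [hHσ, Matrix.sub_mulVec, Matrix.sub_mulVec, Matrix.smul_mulVec,
        Matrix.one_mulVec]
      have hsum : (∑ k : Fin m, yσ x k • Hc k x).mulVec v
          = fun i => ∑ k, yσ x k * (Hc k x).mulVec v i := by
        funext i
        simp only [Matrix.mulVec, dotProduct, Matrix.sum_apply, Matrix.smul_apply,
          smul_eq_mul, Finset.sum_mul, Finset.mul_sum]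
        rw [Finset.sum_comm]
        exact Finset.sum_congr rfl fun k _ => Finset.sum_congr rfl fun t _ => by ring
      rw [hsum]
      simp
    rw [hmv]
    simp [Matrix.mulVec, dotProduct, Matrix.transpose_apply]
  have hgoalR2 : (Smat x (gσ x)).mulVec v j
      = ∑ i, (gradient f x i - ∑ k, A x i k * yσ x k) * (Hc j x).mulVec v i := by
    simp only [Matrix.mulVec, dotProduct, hSmat, Matrix.vecMul, Finset.sum_mul]
    rw [Finset.sum_comm]
    refine Finset.sum_congr rfl fun i _ => ?_
    rw [Finset.mul_sum]
    refine Finset.sum_congr rfl fun t _ => ?_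
    rw [hgσ]
    simp only [Pi.sub_apply, Matrix.mulVec, dotProduct]
    ring
  rw [Pi.add_apply, hgoalL, hgoalR1, hgoalR2]
  exact aux_final (fun i k => A x i k) (fun i => gradient f x i)
    (fun i => (Hf x).mulVec v i) (fun i => v i) (fun k => yσ x k)
    (fun k i => (Hc k x).mulVec v i) (fun k => Ly k v) σ j key
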